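/- Let c ∈ ℝ^d with c_1 ≥ ... ≥ c_d ≥ 0, β > 0, and let k* be such that c_{k*+1} < t_{k*} ≤ c_{k*}, where t_k = (1/k)(∑_{i=1}^k c_i − β). Define z*_i = t_{k*} for i ≤ k*, z*_i = c_i for i > k*, μ* = 0, μ̂*_i = c_i − t_{k*} for i ≤ k* and μ̂*_i = 0 otherwise. Then (z*, t_{k*}, μ*, μ̂*) satisfies the KKT conditions: z* − c − μ* + μ̂* = 0, β = ∑_j μ̂*_j, μ*_j ≥ 0, z*_j ≥ 0, μ*_j z*_j = 0, μ̂*_j ≥ 0, z*_j ≤ t_{k*}, and μ̂*_j (z*_j − t_{k*}) = 0 for all j. -/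

import Mathlib

lemma sum_if_lt {d k : ℕ} (hkd : k ≤ d) (f : ℕ → ℝ) :
    (∑ i : Fin d, if i.val < k then f i.val else 0) = ∑ i ∈ Finset.range k, f i := by
  rw [Fin.sum_univ_eq_sum_range (fun i => if i < k then f i else 0)]
  rw [← Finset.sum_subset (Finset.range_subset_range.2 hkd)
    (by intro x _ hx; simp at hx; simp [hx])]
  exact Finset.sum_congr rfl (by intro x hx; simp at hx; simp [hx])

/-- verification of the KKT conditions for the point built from the
threshold `t_{k*} = (1/k*)(∑_{i=1}^{k*} c_i − β)` (0-based indexing: entries `i < k`). -/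
theorem stmt4 {d : ℕ} (c : Fin d → ℝ) (β : ℝ) (hβ : 0 < β)
    (hmono : ∀ i j : Fin d, i ≤ j → c j ≤ c i) (hnonneg : ∀ i, 0 ≤ c i)
    (k : ℕ) (hk1 : 1 ≤ k) (hkd : k < d)
    (t : ℝ) (ht : t = ((∑ i : Fin d, if i.val < k then c i else 0) - β) / k)
    (hlt : c ⟨k, hkd⟩ < t) (hle : t ≤ c ⟨k - 1, by omega⟩)
    (z μ μhat : Fin d → ℝ)
    (hz : z = fun i => if i.val < k then t else c i)
    (hμ : μ = fun _ => 0)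
    (hμhat : μhat = fun i => if i.val < k then c i - t else 0) :
    (∀ j, z j - c j - μ j + μhat j = 0) ∧
    β = ∑ j, μhat j ∧
    (∀ j, 0 ≤ μ j) ∧ (∀ j, 0 ≤ z j) ∧ (∀ j, μ j * z j = 0) ∧
    (∀ j, 0 ≤ μhat j) ∧ (∀ j, z j ≤ t) ∧ (∀ j, μhat j * (z j - t) = 0) := by
  subst hz hμ hμhat
  have ht0 : 0 < t := lt_of_le_of_lt (hnonneg _) hlt
  -- for j with j.val < k, t ≤ c j
  have hcj : ∀ j : Fin d, j.val < k → t ≤ c j := by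
    intro j hj
    refine le_trans hle (hmono _ _ ?_)
    exact Fin.mk_le_mk.mpr (by omega)
  -- for j with k ≤ j.val, c j ≤ t
  have hcj' : ∀ j : Fin d, ¬ j.val < k → c j ≤ t := by
    intro j hj
    exact le_of_lt (lt_of_le_of_lt (hmono ⟨k, hkd⟩ j (Fin.mk_le_mk.mpr (by omega))) hlt)
  set f : ℕ → ℝ := fun i => if h : i < d then c ⟨i, h⟩ else 0 with hf
  have hfc : ∀ i : Fin d, f i.val = c i := by
    intro i; simp [hf, i.isLt]
  have hsum : β = ∑ j : Fin d, (if j.val < k then c j - t else 0) := by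
    have h1 : (∑ i : Fin d, if i.val < k then c i else 0)
        = ∑ i ∈ Finset.range k, f i := by
      rw [← sum_if_lt hkd.le f]
      exact Finset.sum_congr rfl (fun i _ => by rw [hfc])
    have h2 : (∑ j : Fin d, if j.val < k then c j - t else 0)
        = ∑ i ∈ Finset.range k, (f i - t) := by
      rw [← sum_if_lt hkd.le (fun i => f i - t)]
      exact Finset.sum_congr rfl (fun i _ => by rw [hfc])
    rw [h2, Finset.sum_sub_distrib, Finset.sum_const, Finset.card_range,
      nsmul_eq_mul, ← h1]
    have hk0 : (k : ℝ) ≠ 0 := Nat.cast_ne_zero.mpr (by omega)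
    rw [ht]; field_simp; ring
  refine ⟨?_, hsum, ?_, ?_, ?_, ?_, ?_, ?_⟩
  · intro j; by_cases h : j.val < k <;> simp [h] <;> ring
  · intro j; simp
  · intro j; by_cases h : j.val < k <;> simp [h, ht0.le, hnonneg j]
  · intro j; simp
  · intro j; by_cases h : j.val < k <;> simp [h]
    · linarith [hcj j h]
  · intro j; by_cases h : j.val < k <;> simp [h]
    · exact hcj' j h
  · intro j; by_cases h : j.val < k <;> simp [h]
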